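/- Let λ, c ∈ ℝ with 0 < λ < 1 and c ≥ 0. Set P₁ = (1, λ, 1), P₂ = (1, −λ, 1), P₃ = (0,0,1) and Q(t) = (c, t, 0) in ℝ³ (the vertical case), and let S(t) := ‖N₁(t) × N₂(t)‖² / (‖N₁(t)‖²·‖N₂(t)‖²), where N₁(t) = (P₁−Q(t)) × (P₃−Q(t)) and N₂(t) = (P₂−Q(t)) × (P₃−Q(t)). Then S is strictly increasing on the interval (−∞, −λc]: for all t₁ < t₂ ≤ −λc one has S(t₁) < S(t₂). -/
import Mathlib


noncomputable section

/-- Cross product on `ℝ³`. -/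
def cross3 (u v : Fin 3 → ℝ) : Fin 3 → ℝ :=
  ![u 1 * v 2 - u 2 * v 1, u 2 * v 0 - u 0 * v 2, u 0 * v 1 - u 1 * v 0]

/-- Squared Euclidean norm on `ℝ³`. -/
def normSq3 (v : Fin 3 → ℝ) : ℝ := v 0 ^ 2 + v 1 ^ 2 + v 2 ^ 2

/-- Squared sine of the angle between the plane through `Q(t), P₁, P₃` and the plane
through `Q(t), P₂, P₃`, where `P₁ = (1, l, 1)`, `P₂ = (1, -l, 1)`, `P₃ = (0,0,1)` and
`Q(t) = (c, t, 0)` (the vertical case). -/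
def SvertCurve (l c : ℝ) (t : ℝ) : ℝ :=
  let P₁ : Fin 3 → ℝ := ![1, l, 1]
  let P₂ : Fin 3 → ℝ := ![1, -l, 1]
  let P₃ : Fin 3 → ℝ := ![0, 0, 1]
  let Q : Fin 3 → ℝ := ![c, t, 0]
  let N₁ := cross3 (P₁ - Q) (P₃ - Q)
  let N₂ := cross3 (P₂ - Q) (P₃ - Q)
  normSq3 (cross3 N₁ N₂) / (normSq3 N₁ * normSq3 N₂)

lemma SvertCurve_eq (l c t : ℝ) :
    SvertCurve l c t =
      4 * l ^ 2 * (c ^ 2 + t ^ 2 + 1) /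
        ((l ^ 2 + 1 + (c * l - t) ^ 2) * (l ^ 2 + 1 + (c * l + t) ^ 2)) := by
  simp only [SvertCurve, cross3, normSq3, Pi.sub_apply, Matrix.cons_val_zero,
    Matrix.cons_val_one, Matrix.head_cons, Matrix.cons_val_two, Matrix.tail_cons]
  congr 1 <;> ring

theorem stmt16 (l c : ℝ) (hl : 0 < l) (hl1 : l < 1) (hc : 0 ≤ c) :
    ∀ t₁ t₂ : ℝ, t₁ < t₂ → t₂ ≤ -(l * c) →
      SvertCurve l c t₁ < SvertCurve l c t₂ := by
  intro t₁ t₂ h12 h2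
  rw [SvertCurve_eq, SvertCurve_eq]
  have hlc : 0 ≤ l * c := mul_nonneg hl.le hc
  have hD : ∀ t : ℝ, 0 < (l ^ 2 + 1 + (c * l - t) ^ 2) * (l ^ 2 + 1 + (c * l + t) ^ 2) := by
    intro t
    have h1 : 0 < l ^ 2 + 1 + (c * l - t) ^ 2 := by positivity
    have h2 : 0 < l ^ 2 + 1 + (c * l + t) ^ 2 := by positivity
    exact mul_pos h1 h2
  rw [div_lt_div_iff₀ (hD t₁) (hD t₂)]
  -- key quantities
  have ht2 : t₂ ≤ 0 := h2.trans (by linarith)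
  have hx : t₂ ^ 2 < t₁ ^ 2 := by nlinarith
  have hy : (l * c) ^ 2 ≤ t₂ ^ 2 := by nlinarith
  have hbra : (l ^ 2 + 1 + c ^ 2 * l ^ 2) ^ 2
      - 2 * (l ^ 2 + 1 + c ^ 2 * l ^ 2) * (c ^ 2 + 1)
      + 4 * (l * c) ^ 2 * (c ^ 2 + 1)
      - (c ^ 2 + 1) * (t₁ ^ 2 + t₂ ^ 2) - t₁ ^ 2 * t₂ ^ 2 < 0 := by
    have hx' : (l * c) ^ 2 ≤ t₁ ^ 2 := hy.trans hx.le
    have hM : (0:ℝ) < c ^ 2 + 1 := by positivity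
    have h1 : (c ^ 2 + 1) * (l * c) ^ 2 ≤ (c ^ 2 + 1) * t₁ ^ 2 :=
      mul_le_mul_of_nonneg_left hx' hM.le
    have h2 : (c ^ 2 + 1) * (l * c) ^ 2 ≤ (c ^ 2 + 1) * t₂ ^ 2 :=
      mul_le_mul_of_nonneg_left hy hM.le
    have h3 : (l * c) ^ 2 * (l * c) ^ 2 ≤ t₁ ^ 2 * t₂ ^ 2 :=
      mul_le_mul hx' hy (sq_nonneg _) (sq_nonneg _)
    have h4 : 0 < (l ^ 2 + 1) * ((1 - l ^ 2) * (1 + 2 * c ^ 2)) := by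
      have : (0:ℝ) < 1 - l ^ 2 := by nlinarith
      positivity
    nlinarith [h1, h2, h3, h4]
  nlinarith [mul_pos (mul_pos (mul_pos (by norm_num : (0:ℝ) < 4) (pow_pos hl 2))
      (sub_pos.mpr hx)) (neg_pos.mpr hbra)]
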